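/- Under Assumptions that the closure P̄ of {P_θ} consists of irreducible aperiodic matrices with common recurrent state x* and that costs C_θ are uniformly bounded in [C_lo, C_hi], the value functions h_θ(x) = E^θ_x[exp(∑_{i=0}^{τ_{x*}−1}(αC_θ(Φ_i) − Λ_θ))] are uniformly bounded: there exist 0 < h_lo ≤ h_hi < ∞ with h_θ(x) ∈ [h_lo, h_hi] for all x ∈ X and θ ∈ ℝ^l. -/

import Mathlib

open Matrix Filter Topology

/-- A (row-)stochastic matrix on a finite state space. -/
def StochasticMat {X : Type*} [Fintype X] (P : Matrix X X ℝ) : Prop :=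
  (∀ x y, 0 ≤ P x y) ∧ ∀ x, ∑ y, P x y = 1

/-- A primitive nonnegative matrix: some power has all entries strictly positive.
For finite stochastic matrices this is equivalent to irreducibility together with
aperiodicity. -/
def PrimitiveMat {X : Type*} [Fintype X] [DecidableEq X] (P : Matrix X X ℝ) : Prop :=
  ∃ n : ℕ, 0 < n ∧ ∀ x y, 0 < (P ^ n) x y

/-- `retE P xs x F = E_x[ F τ (Φ_0, …, Φ_τ) ]` where `τ = inf {i ≥ 1 : Φ_i = xs}` is the
first return/hitting time of `xs`, written as a sum over the return time `τ = k+1` and the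
intermediate states `(Φ_1, …, Φ_k)` (all ≠ `xs`); the path fed to `F` is
`(x, Φ_1, …, Φ_k, xs) : Fin (k+2) → X`.  In particular, taking
`F k p = exp (∑_{i=0}^{k} f (p i))` gives `E_x[exp (∑_{i=0}^{τ-1} f(Φ_i))]`, and
`F k p = (k+1)` gives `E_x[τ]`. -/
noncomputable def retE {X : Type*} [Fintype X] [DecidableEq X] (P : Matrix X X ℝ)
    (xs x : X) (F : (k : ℕ) → (Fin (k + 2) → X) → ℝ) : ℝ :=
  ∑' k : ℕ, ∑ w : Fin k → X,
    if ∀ i, w i ≠ xs then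
      (∏ i : Fin (k + 1),
          P ((Fin.snoc (Fin.cons x w) xs : Fin (k+2) → X) i.castSucc) ((Fin.snoc (Fin.cons x w) xs : Fin (k+2) → X) i.succ)) *
        F k (Fin.snoc (Fin.cons x w) xs : Fin (k+2) → X)
    else 0


namespace Statement14Aux

section
variable {X : Type*} [Fintype X] [DecidableEq X] [Nonempty X]

lemma pathSum (M : Matrix X X ℝ) (v : X → ℝ) :
    ∀ (k : ℕ) (x : X), (M ^ k *ᵥ v) x =
      ∑ w : Fin k → X,
        (∏ i : Fin k, M ((Fin.cons x w : Fin (k+1) → X) i.castSucc)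
            ((Fin.cons x w : Fin (k+1) → X) i.succ)) *
          v ((Fin.cons x w : Fin (k+1) → X) (Fin.last k)) := by
  intro k
  induction k with
  | zero =>
      intro x
      simp [Matrix.one_mulVec]
  | succ k ih =>
      intro x
      rw [pow_succ', ← Matrix.mulVec_mulVec, Matrix.mulVec]
      calc ∑ y, M x y * (M ^ k *ᵥ v) y
          = ∑ y, ∑ w : Fin k → X, M x y *
              ((∏ i : Fin k, M ((Fin.cons y w : Fin (k+1) → X) i.castSucc)
                  ((Fin.cons y w : Fin (k+1) → X) i.succ)) *
                v ((Fin.cons y w : Fin (k+1) → X) (Fin.last k))) := by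
            simp only [ih, Finset.mul_sum]
        _ = ∑ p : X × (Fin k → X), M x p.1 *
              ((∏ i : Fin k, M ((Fin.cons p.1 p.2 : Fin (k+1) → X) i.castSucc)
                  ((Fin.cons p.1 p.2 : Fin (k+1) → X) i.succ)) *
                v ((Fin.cons p.1 p.2 : Fin (k+1) → X) (Fin.last k))) := by
            rw [Fintype.sum_prod_type]
        _ = ∑ w : Fin (k+1) → X,
              (∏ i : Fin (k+1), M ((Fin.cons x w : Fin (k+2) → X) i.castSucc)
                  ((Fin.cons x w : Fin (k+2) → X) i.succ)) *
                v ((Fin.cons x w : Fin (k+2) → X) (Fin.last (k+1))) := by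
            refine Fintype.sum_bijective (fun p : X × (Fin k → X) => (Fin.cons p.1 p.2 : Fin (k+1) → X))
              ((Fin.consEquiv fun _ => X).bijective) _ _ fun p => ?_
            obtain ⟨y, w⟩ := p
            rw [Fin.prod_univ_succ]
            simp only [Fin.castSucc_zero, Fin.cons_zero, ← Fin.succ_castSucc, Fin.cons_succ,
              ← Fin.succ_last]
            ring

lemma summand_eq (A : Matrix X X ℝ) (xs x : X) (k : ℕ) :
    (∑ w : Fin k → X,
      if ∀ i, w i ≠ xs then
        ∏ i : Fin (k+1), A ((Fin.snoc (Fin.cons x w) xs : Fin (k+2) → X) i.castSucc)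
          ((Fin.snoc (Fin.cons x w) xs : Fin (k+2) → X) i.succ)
      else 0)
    = ∑ w : Fin k → X,
        (∏ i : Fin k, ((Matrix.of fun a b => if b = xs then (0:ℝ) else A a b))
            ((Fin.cons x w : Fin (k+1) → X) i.castSucc)
            ((Fin.cons x w : Fin (k+1) → X) i.succ)) *
          A ((Fin.cons x w : Fin (k+1) → X) (Fin.last k)) xs := by
  refine Finset.sum_congr rfl fun w _ => ?_
  by_cases hw : ∀ i, w i ≠ xs
  · rw [if_pos hw, Fin.prod_univ_castSucc]
    congr 1
    · refine Finset.prod_congr rfl fun i _ => ?_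
      rw [Fin.succ_castSucc, Fin.snoc_castSucc, Fin.snoc_castSucc, Matrix.of_apply,
        if_neg]
      exact hw i
    · rw [Fin.succ_last, Fin.snoc_last, Fin.snoc_castSucc]
  · rw [if_neg hw]
    push_neg at hw
    obtain ⟨i, hi⟩ := hw
    refine (mul_eq_zero.mpr (Or.inl (Finset.prod_eq_zero (Finset.mem_univ i) ?_))).symm
    simp [Fin.cons_succ, hi]

lemma pow_entry_nonneg {M : Matrix X X ℝ} (h : ∀ x y, 0 ≤ M x y) (n : ℕ) :
    ∀ x y, 0 ≤ (M ^ n) x y := by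
  induction n with
  | zero => intro x y; rw [pow_zero, Matrix.one_apply]; split <;> norm_num
  | succ n ih =>
      intro x y
      rw [pow_succ, Matrix.mul_apply]
      exact Finset.sum_nonneg fun z _ => mul_nonneg (ih x z) (h z y)

lemma stoch_pow {M : Matrix X X ℝ} (h : (∀ x y, 0 ≤ M x y) ∧ ∀ x, ∑ y, M x y = 1) (n : ℕ) :
    (∀ x y, 0 ≤ (M ^ n) x y) ∧ ∀ x, ∑ y, (M ^ n) x y = 1 := by
  refine ⟨pow_entry_nonneg h.1 n, ?_⟩
  induction n with
  | zero => intro x; rw [pow_zero]; simp [Matrix.one_apply]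
  | succ n ih =>
      intro x
      rw [pow_succ]
      simp only [Matrix.mul_apply]
      rw [Finset.sum_comm]
      calc ∑ z, ∑ y, (M ^ n) x z * M z y
          = ∑ z, (M ^ n) x z * ∑ y, M z y := by simp [Finset.mul_sum]
        _ = 1 := by simp [h.2, ih x]

lemma pos_pow_mono {M : Matrix X X ℝ} (h : (∀ x y, 0 ≤ M x y) ∧ ∀ x, ∑ y, M x y = 1)
    {n m : ℕ} (hp : ∀ x y, 0 < (M ^ n) x y) (hnm : n ≤ m) : ∀ x y, 0 < (M ^ m) x y := by
  intro x y
  obtain ⟨d, rfl⟩ := Nat.exists_eq_add_of_le hnm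
  rw [add_comm n d, pow_add, Matrix.mul_apply]
  have hrow := (stoch_pow h d).2 x
  have hnn := (stoch_pow h d).1
  have : ∃ z, 0 < (M ^ d) x z := by
    by_contra hc
    push_neg at hc
    have : ∑ z, (M ^ d) x z = 0 :=
      le_antisymm (Finset.sum_nonpos fun z _ => hc z) (Finset.sum_nonneg fun z _ => hnn x z)
    rw [hrow] at this; norm_num at this
  obtain ⟨z, hz⟩ := this
  have : 0 < (M ^ d) x z * (M ^ n) z y := mul_pos hz (hp z y)
  refine lt_of_lt_of_le this ?_
  exact Finset.single_le_sum (fun w _ => mul_nonneg (hnn x w) (hp w y).le) (Finset.mem_univ z)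

lemma cont_pow_entry (n : ℕ) (x y : X) : Continuous fun M : Matrix X X ℝ => (M ^ n) x y := by
  have h : Continuous fun M : Matrix X X ℝ => M ^ n := continuous_pow n
  exact (continuous_apply y).comp ((continuous_apply x).comp h)

lemma compact_box : IsCompact {M : Matrix X X ℝ | ∀ x y, M x y ∈ Set.Icc (0:ℝ) 1} := by
  have h1 : IsCompact (Set.univ.pi fun _ : X => Set.univ.pi fun _ : X => Set.Icc (0:ℝ) 1) :=
    isCompact_univ_pi fun _ => isCompact_univ_pi fun _ => isCompact_Icc
  suffices hs : ({M : Matrix X X ℝ | ∀ x y, M x y ∈ Set.Icc (0:ℝ) 1} : Set (Matrix X X ℝ)) =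
      Set.univ.pi fun _ : X => Set.univ.pi fun _ : X => Set.Icc (0:ℝ) 1 by rw [hs]; exact h1
  ext M
  simp only [Set.mem_setOf_eq]
  constructor
  · intro h
    exact Set.mem_univ_pi.mpr fun x => Set.mem_univ_pi.mpr fun y => h x y
  · intro h x y
    exact Set.mem_univ_pi.mp (Set.mem_univ_pi.mp h x) y

lemma uniform_pos {K : Set (Matrix X X ℝ)} (hne : K.Nonempty)
    (hst : ∀ Q ∈ K, ((∀ x y, 0 ≤ Q x y) ∧ ∀ x, ∑ y, Q x y = 1) ∧
      (∃ n : ℕ, 0 < n ∧ ∀ x y, 0 < (Q ^ n) x y)) (hKcl : IsClosed K) :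
    ∃ N : ℕ, 1 ≤ N ∧ ∃ δ : ℝ, 0 < δ ∧ δ ≤ 1 ∧ ∀ Q ∈ K, ∀ x y, δ ≤ (Q ^ N) x y := by
  -- K is compact
  have hKC : IsCompact K := by
    refine compact_box.of_isClosed_subset hKcl fun Q hQ x y => ?_
    have h1 := (hst Q hQ).1
    refine ⟨h1.1 x y, ?_⟩
    rw [← h1.2 x]
    exact Finset.single_le_sum (fun z _ => h1.1 x z) (Finset.mem_univ y)
  -- choose exponent for each Q, open covering
  choose! n hn0 hnpos using fun Q (hQ : Q ∈ K) => (hst Q hQ).2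
  have hcover : K ⊆ ⋃ Q ∈ K, {M : Matrix X X ℝ | ∀ x y, 0 < (M ^ n Q) x y} := by
    intro Q hQ
    exact Set.mem_biUnion hQ (hnpos Q hQ)
  have hopen : ∀ Q ∈ K, IsOpen {M : Matrix X X ℝ | ∀ x y, 0 < (M ^ n Q) x y} := by
    intro Q _
    have : {M : Matrix X X ℝ | ∀ x y, 0 < (M ^ n Q) x y} =
        ⋂ x, ⋂ y, (fun M : Matrix X X ℝ => (M ^ n Q) x y) ⁻¹' Set.Ioi 0 := by
      ext M; simp [Set.mem_iInter]
    rw [this]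
    exact isOpen_iInter_of_finite fun x => isOpen_iInter_of_finite fun y =>
      (cont_pow_entry (n Q) x y).isOpen_preimage _ isOpen_Ioi
  obtain ⟨t, hts, htfin, htcov⟩ := hKC.elim_finite_subcover_image hopen hcover
  set N : ℕ := max 1 (htfin.toFinset.sup n) with hN
  have hN1 : 1 ≤ N := le_max_left _ _
  have hposN : ∀ Q ∈ K, ∀ x y, 0 < (Q ^ N) x y := by
    intro Q hQ
    obtain ⟨R, hR, hQR⟩ := Set.mem_iUnion₂.mp (htcov hQ)
    refine pos_pow_mono (hst Q hQ).1 hQR ?_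
    exact le_trans (Finset.le_sup (htfin.mem_toFinset.mpr hR)) (le_max_right _ _)
  -- per-pair minimum on compact K
  have key : ∀ p : X × X, ∃ d : ℝ, 0 < d ∧ ∀ Q ∈ K, d ≤ (Q ^ N) p.1 p.2 := by
    intro p
    obtain ⟨Q0, hQ0, hmin⟩ := hKC.exists_isMinOn hne (cont_pow_entry N p.1 p.2).continuousOn
    exact ⟨(Q0 ^ N) p.1 p.2, hposN Q0 hQ0 p.1 p.2, fun Q hQ => hmin hQ⟩
  choose d hd0 hdle using key
  obtain ⟨Q1, hQ1⟩ := hne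
  have hune : (Finset.univ : Finset (X × X)).Nonempty := Finset.univ_nonempty
  refine ⟨N, hN1, min 1 (Finset.univ.inf' hune d), ?_, min_le_left _ _, ?_⟩
  · refine lt_min one_pos ?_
    rw [Finset.lt_inf'_iff]
    exact fun p _ => hd0 p
  · intro Q hQ x y
    refine le_trans (min_le_right _ _) (le_trans ?_ (hdle (x, y) Q hQ))
    exact Finset.inf'_le _ (Finset.mem_univ _)


lemma mulVec_nonneg' {M : Matrix X X ℝ} {v : X → ℝ} (hM : ∀ x y, 0 ≤ M x y)
    (hv : ∀ x, 0 ≤ v x) (x : X) : 0 ≤ (M *ᵥ v) x :=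
  Finset.sum_nonneg fun y _ => mul_nonneg (hM x y) (hv y)

lemma per_matrix (Pm : Matrix X X ℝ) (hP : (∀ x y, 0 ≤ Pm x y) ∧ ∀ x, ∑ y, Pm x y = 1)
    (g : X → ℝ) (xs : X) (hv : X → ℝ) (hvpos : ∀ x, 0 < hv x)
    (heig : (Matrix.of fun x y => Real.exp (g x) * Pm x y) *ᵥ hv = hv)
    (β : ℝ) (hβ : 0 ≤ β) (hg : ∀ x, -β ≤ g x)
    (N : ℕ) (hN1 : 1 ≤ N) (δ : ℝ) (hδ : 0 < δ)
    (hposN : ∀ x y, δ ≤ (Pm ^ N) x y) (x : X) :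
    retE Pm xs x (fun k p => Real.exp (∑ i : Fin (k+1), g (p i.castSucc)))
      ∈ Set.Icc (Real.exp (-(N*β)) * δ) (Real.exp (N*β) / δ) := by
  set A : Matrix X X ℝ := Matrix.of fun a b => Real.exp (g a) * Pm a b with hA
  set B : Matrix X X ℝ := Matrix.of fun a b => if b = xs then 0 else A a b with hB
  set cv : X → ℝ := fun a => A a xs with hcv
  set Bp : Matrix X X ℝ := Matrix.of fun a b => if b = xs then 0 else Pm a b with hBp
  set cp : X → ℝ := fun a => Pm a xs with hcp
  -- nonnegativity of entries
  have hAnn : ∀ a b, 0 ≤ A a b := fun a b => mul_nonneg (Real.exp_nonneg _) (hP.1 a b)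
  have hBnn : ∀ a b, 0 ≤ B a b := by
    intro a b; rw [hB]; dsimp only [Matrix.of_apply]; split
    · exact le_refl 0
    · exact hAnn a b
  have hBpnn : ∀ a b, 0 ≤ Bp a b := by
    intro a b; rw [hBp]; dsimp only [Matrix.of_apply]; split
    · exact le_refl 0
    · exact hP.1 a b
  have hcvnn : ∀ a, 0 ≤ cv a := fun a => hAnn a xs
  have hcpnn : ∀ a, 0 ≤ cp a := fun a => hP.1 a xs
  have hTnn : ∀ k a, 0 ≤ (B ^ k *ᵥ cv) a :=
    fun k a => mulVec_nonneg' (pow_entry_nonneg hBnn k) hcvnn a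
  have hpnn : ∀ k a, 0 ≤ (Bp ^ k *ᵥ cp) a :=
    fun k a => mulVec_nonneg' (pow_entry_nonneg hBpnn k) hcpnn a
  -- retE as a tsum of T
  have hretE : retE Pm xs x (fun k p => Real.exp (∑ i : Fin (k+1), g (p i.castSucc)))
      = ∑' k, (B ^ k *ᵥ cv) x := by
    unfold retE
    refine tsum_congr fun k => ?_
    rw [pathSum]
    rw [← summand_eq A xs x k]
    refine Finset.sum_congr rfl fun w _ => ?_
    by_cases hw : ∀ i, w i ≠ xs
    · rw [if_pos hw, if_pos hw]
      dsimp only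
      rw [Real.exp_sum, ← Finset.prod_mul_distrib]
      refine Finset.prod_congr rfl fun i _ => ?_
      rw [hA]; dsimp only [Matrix.of_apply]; ring
    · rw [if_neg hw, if_neg hw]
  rw [hretE]
  -- decomposition of A-mulVec
  have hsplit : ∀ (M : Matrix X X ℝ) (v : X → ℝ) (a : X),
      (M *ᵥ v) a = M a xs * v xs +
        ((Matrix.of fun a b => if b = xs then (0:ℝ) else M a b) *ᵥ v) a := by
    intro M v a
    rw [Matrix.mulVec, Matrix.mulVec, dotProduct, dotProduct]
    have h1 : ∀ b, (Matrix.of fun a b => if b = xs then (0:ℝ) else M a b) a b * v b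
        = M a b * v b - (if b = xs then M a b * v b else 0) := by
      intro b; dsimp only [Matrix.of_apply]; split <;> ring
    simp only [h1]
    rw [Finset.sum_sub_distrib, Finset.sum_ite_eq' Finset.univ xs fun b => M a b * v b]
    simp
  have hBh : B *ᵥ hv = hv - hv xs • cv := by
    funext a
    have h := hsplit A hv a
    rw [heig, ← hB] at h
    simp only [Pi.sub_apply, Pi.smul_apply, smul_eq_mul, hcv]
    linarith
  have hiden : ∀ n, ∀ a, hv a =
      (∑ k ∈ Finset.range n, (B ^ k *ᵥ cv) a) * hv xs + (B ^ n *ᵥ hv) a := by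
    intro n
    induction n with
    | zero => intro a; simp [Matrix.one_mulVec]
    | succ n ih =>
        intro a
        have hstep : B ^ (n+1) *ᵥ hv = B ^ n *ᵥ hv - hv xs • (B ^ n *ᵥ cv) := by
          rw [pow_succ, ← Matrix.mulVec_mulVec, hBh, Matrix.mulVec_sub, Matrix.mulVec_smul]
        rw [Finset.sum_range_succ, hstep]
        simp only [Pi.sub_apply, Pi.smul_apply, smul_eq_mul]
        have := ih a
        ring_nf
        ring_nf at this
        linarith
  have hvxs : 0 < hv xs := hvpos xs
  have hpartial : ∀ n, ∑ k ∈ Finset.range n, (B ^ k *ᵥ cv) x ≤ hv x / hv xs := by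
    intro n
    have h := hiden n x
    have h2 := mulVec_nonneg' (pow_entry_nonneg hBnn n) (fun a => (hvpos a).le) x
    rw [le_div_iff₀ hvxs]
    linarith
  have hsummable : Summable fun k => (B ^ k *ᵥ cv) x :=
    summable_of_sum_range_le (fun k => hTnn k x) hpartial
  have hstepA : ∀ a b, Real.exp (-β) * Pm a b ≤ A a b := by
    intro a b; rw [hA]; dsimp only [Matrix.of_apply]
    exact mul_le_mul_of_nonneg_right (Real.exp_le_exp.mpr (hg a)) (hP.1 a b)
  have hstepB : ∀ a b, Real.exp (-β) * Bp a b ≤ B a b := by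
    intro a b; rw [hB, hBp]; dsimp only [Matrix.of_apply]; split
    · simp
    · exact hstepA a b
  have hstepc : ∀ a, Real.exp (-β) * cp a ≤ cv a := fun a => hstepA a xs
  have hcomp : ∀ (n : ℕ) (a : X),
      Real.exp (-((n:ℝ)*β)) * ((Pm ^ n *ᵥ hv) a) ≤ (A ^ n *ᵥ hv) a := by
    intro n
    induction n with
    | zero => intro a; simp
    | succ n ih =>
        intro a
        rw [pow_succ' Pm, pow_succ' A, ← Matrix.mulVec_mulVec, ← Matrix.mulVec_mulVec]
        have e1 : (Pm *ᵥ (Pm ^ n *ᵥ hv)) a = ∑ b, Pm a b * (Pm ^ n *ᵥ hv) b := rfl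
        have e2 : (A *ᵥ (A ^ n *ᵥ hv)) a = ∑ b, A a b * (A ^ n *ᵥ hv) b := rfl
        rw [e1, e2, Finset.mul_sum]
        refine Finset.sum_le_sum fun b _ => ?_
        have he : Real.exp (-(((n+1 : ℕ):ℝ)*β)) = Real.exp (-β) * Real.exp (-((n:ℝ)*β)) := by
          rw [← Real.exp_add]; congr 1; push_cast; ring
        rw [he, mul_mul_mul_comm]
        refine mul_le_mul (hstepA a b) (ih b) ?_ (hAnn a b)
        exact mul_nonneg (Real.exp_nonneg _)
          (mulVec_nonneg' (pow_entry_nonneg hP.1 n) (fun z => (hvpos z).le) b)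
  have hcomp2 : ∀ (k : ℕ) (a : X),
      Real.exp (-(((k+1:ℕ):ℝ)*β)) * ((Bp ^ k *ᵥ cp) a) ≤ (B ^ k *ᵥ cv) a := by
    intro k
    induction k with
    | zero =>
        intro a
        simp only [pow_zero, Matrix.one_mulVec, Nat.cast_one]
        simpa using hstepc a
    | succ k ih =>
        intro a
        rw [pow_succ' Bp, pow_succ' B, ← Matrix.mulVec_mulVec, ← Matrix.mulVec_mulVec]
        have e1 : (Bp *ᵥ (Bp ^ k *ᵥ cp)) a = ∑ b, Bp a b * (Bp ^ k *ᵥ cp) b := rfl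
        have e2 : (B *ᵥ (B ^ k *ᵥ cv)) a = ∑ b, B a b * (B ^ k *ᵥ cv) b := rfl
        rw [e1, e2, Finset.mul_sum]
        refine Finset.sum_le_sum fun b _ => ?_
        have he : Real.exp (-(((k+1+1 : ℕ):ℝ)*β))
            = Real.exp (-β) * Real.exp (-(((k+1:ℕ):ℝ)*β)) := by
          rw [← Real.exp_add]; congr 1; push_cast; ring
        rw [he, mul_mul_mul_comm]
        refine mul_le_mul (hstepB a b) (ih b) ?_ (hBnn a b)
        exact mul_nonneg (Real.exp_nonneg _) (hpnn k b)
  have hAn : ∀ n, A ^ n *ᵥ hv = hv := by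
    intro n
    induction n with
    | zero => simp [Matrix.one_mulVec]
    | succ n ih => rw [pow_succ, ← Matrix.mulVec_mulVec, heig, ih]
  have hF10 : Real.exp (-((N:ℝ)*β)) * (δ * hv x) ≤ hv xs := by
    have h1 := hcomp N xs
    rw [hAn N] at h1
    have h2 : δ * hv x ≤ (Pm ^ N *ᵥ hv) xs := by
      rw [Matrix.mulVec, dotProduct]
      refine le_trans (mul_le_mul_of_nonneg_right (hposN xs x) (hvpos x).le) ?_
      exact Finset.single_le_sum
        (fun b _ => mul_nonneg ((stoch_pow hP N).1 xs b) (hvpos b).le) (Finset.mem_univ x)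
    exact le_trans (mul_le_mul_of_nonneg_left h2 (Real.exp_nonneg _)) h1
  have hub : ∑' k, (B ^ k *ᵥ cv) x ≤ Real.exp ((N:ℝ)*β) / δ := by
    refine Summable.tsum_le_of_sum_range_le hsummable fun n => le_trans (hpartial n) ?_
    rw [div_le_div_iff₀ hvxs hδ]
    calc hv x * δ = Real.exp ((N:ℝ)*β) * (Real.exp (-((N:ℝ)*β)) * (δ * hv x)) := by
          rw [← mul_assoc, ← Real.exp_add]
          simp
          ring
      _ ≤ Real.exp ((N:ℝ)*β) * hv xs := mul_le_mul_of_nonneg_left hF10 (Real.exp_nonneg _)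
  have hF13 : ∀ (n : ℕ) (a : X),
      (Pm ^ (n+1)) a xs ≤ ∑ k ∈ Finset.range (n+1), (Bp ^ k *ᵥ cp) a := by
    intro n
    induction n with
    | zero =>
        intro a
        simp [pow_one, Matrix.one_mulVec, hcp]
    | succ n ih =>
        intro a
        have hrw : (Pm ^ (n+2)) a xs = (Pm *ᵥ fun b => (Pm ^ (n+1)) b xs) a := by
          rw [pow_succ' Pm]
          rfl
        rw [hrw, hsplit Pm _ a, ← hBp]
        have hb1 : Pm a xs * (Pm ^ (n+1)) xs xs ≤ cp a := by
          have h1 : (Pm ^ (n+1)) xs xs ≤ 1 := by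
            have := (stoch_pow hP (n+1)).2 xs
            rw [← this]
            exact Finset.single_le_sum (fun b _ => (stoch_pow hP (n+1)).1 xs b)
              (Finset.mem_univ xs)
          have := mul_le_mul_of_nonneg_left h1 (hP.1 a xs)
          simpa [hcp] using this
        have hb2 : (Bp *ᵥ fun b => (Pm ^ (n+1)) b xs) a
            ≤ ∑ k ∈ Finset.range (n+1), (Bp ^ (k+1) *ᵥ cp) a := by
          have hmono : (Bp *ᵥ fun b => (Pm ^ (n+1)) b xs) a
              ≤ (Bp *ᵥ fun b => ∑ k ∈ Finset.range (n+1), (Bp ^ k *ᵥ cp) b) a := by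
            refine Finset.sum_le_sum fun b _ => ?_
            exact mul_le_mul_of_nonneg_left (ih b) (hBpnn a b)
          refine le_trans hmono (le_of_eq ?_)
          rw [Matrix.mulVec, dotProduct]
          simp only [Finset.mul_sum]
          rw [Finset.sum_comm]
          refine Finset.sum_congr rfl fun k _ => ?_
          rw [pow_succ' Bp, ← Matrix.mulVec_mulVec]
          rfl
        calc Pm a xs * (Pm ^ (n+1)) xs xs + (Bp *ᵥ fun b => (Pm ^ (n+1)) b xs) a
            ≤ cp a + ∑ k ∈ Finset.range (n+1), (Bp ^ (k+1) *ᵥ cp) a := add_le_add hb1 hb2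
          _ = ∑ k ∈ Finset.range (n+2), (Bp ^ k *ᵥ cp) a := by
              rw [Finset.sum_range_succ' (fun k => (Bp ^ k *ᵥ cp) a) (n+1)]
              simp [Matrix.one_mulVec]
              ring
  have hlb : Real.exp (-((N:ℝ)*β)) * δ ≤ ∑' k, (B ^ k *ᵥ cv) x := by
    refine le_trans ?_ (Summable.sum_le_tsum (Finset.range N) (fun k _ => hTnn k x) hsummable)
    obtain ⟨N', rfl⟩ : ∃ N', N = N' + 1 := ⟨N - 1, (Nat.succ_pred_eq_of_pos hN1).symm⟩
    calc Real.exp (-(((N'+1:ℕ):ℝ)*β)) * δ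
        ≤ Real.exp (-(((N'+1:ℕ):ℝ)*β)) * (Pm ^ (N'+1)) x xs :=
          mul_le_mul_of_nonneg_left (hposN x xs) (Real.exp_nonneg _)
      _ ≤ Real.exp (-(((N'+1:ℕ):ℝ)*β)) * ∑ k ∈ Finset.range (N'+1), (Bp ^ k *ᵥ cp) x :=
          mul_le_mul_of_nonneg_left (hF13 N' x) (Real.exp_nonneg _)
      _ = ∑ k ∈ Finset.range (N'+1), Real.exp (-(((N'+1:ℕ):ℝ)*β)) * (Bp ^ k *ᵥ cp) x :=
          by rw [Finset.mul_sum]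
      _ ≤ ∑ k ∈ Finset.range (N'+1), Real.exp (-(((k+1:ℕ):ℝ)*β)) * (Bp ^ k *ᵥ cp) x := by
          refine Finset.sum_le_sum fun k hk => ?_
          refine mul_le_mul_of_nonneg_right (Real.exp_le_exp.mpr ?_) (hpnn k x)
          have hk2 : (k:ℝ) ≤ (N':ℝ) := by
            exact_mod_cast Nat.lt_succ_iff.mp (Finset.mem_range.mp hk)
          push_cast
          nlinarith
      _ ≤ ∑ k ∈ Finset.range (N'+1), (B ^ k *ᵥ cv) x :=
          Finset.sum_le_sum fun k _ => hcomp2 k x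
  exact Set.mem_Icc.mpr ⟨hlb, hub⟩

end

end Statement14Aux

/-- Suppose the closure of the family `{P_θ : θ ∈ ℝ^l}` consists of
irreducible aperiodic stochastic matrices (with common recurrent state `xs`), and the
costs `C_θ` are uniformly bounded in `[Clo, Chi]`. Then the relative value functions
`h_θ(x) = E^θ_x[exp (∑_{i=0}^{τ-1} (α C_θ(Φ_i) − Λ_θ))]` are uniformly bounded: there
exist `0 < hlo ≤ hhi < ∞` with `h_θ(x) ∈ [hlo, hhi]` for all `x` and `θ`.  Here `Λ_θ` is
the risk-sensitive cost, i.e. the log-Perron eigenvalue of `diag (e^{α C_θ}) P_θ`,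
characterized by a strictly positive right eigenvector. -/
theorem statement14 {X : Type*} [Fintype X] [DecidableEq X] [Nonempty X] (l : ℕ)
    (P : (Fin l → ℝ) → Matrix X X ℝ) (C : (Fin l → ℝ) → X → ℝ)
    (α : ℝ) (hα : 0 < α) (xs : X)
    (hstoch : ∀ θ, StochasticMat (P θ))
    (hcl : ∀ Q ∈ closure (Set.range P), StochasticMat Q ∧ PrimitiveMat Q)
    (Clo Chi : ℝ) (hC : ∀ θ x, C θ x ∈ Set.Icc Clo Chi)
    (Λ : (Fin l → ℝ) → ℝ)
    (hΛ : ∀ θ, ∃ h : X → ℝ, (∀ x, 0 < h x) ∧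
      (Matrix.of fun x y => Real.exp (α * C θ x) * P θ x y) *ᵥ h = Real.exp (Λ θ) • h) :
    ∃ hlo hhi : ℝ, 0 < hlo ∧ hlo ≤ hhi ∧ ∀ θ x,
      retE (P θ) xs x
          (fun k p => Real.exp (∑ i : Fin (k + 1), (α * C θ (p i.castSucc) - Λ θ)))
        ∈ Set.Icc hlo hhi := by
  classical
  obtain ⟨z0⟩ := (inferInstance : Nonempty X)
  have hCC : Clo ≤ Chi := le_trans (hC (fun _ => 0) z0).1 (hC (fun _ => 0) z0).2
  set β : ℝ := α * (Chi - Clo) with hβdef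
  have hβ0 : 0 ≤ β := mul_nonneg hα.le (by linarith)
  -- uniform positivity of powers on the closure
  have hne : (closure (Set.range P)).Nonempty :=
    ⟨P (fun _ => 0), subset_closure (Set.mem_range_self _)⟩
  obtain ⟨N, hN1, δ, hδ, hδ1, hpos⟩ :=
    Statement14Aux.uniform_pos hne (fun Q hQ => hcl Q hQ) isClosed_closure
  refine ⟨Real.exp (-((N:ℝ)*β)) * δ, Real.exp ((N:ℝ)*β) / δ, ?_, ?_, ?_⟩
  · positivity
  · have h1 : Real.exp (-((N:ℝ)*β)) ≤ Real.exp ((N:ℝ)*β) := by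
      apply Real.exp_le_exp.mpr
      nlinarith [Nat.cast_nonneg (α := ℝ) N]
    rw [le_div_iff₀ hδ]
    have hδδ : δ * δ ≤ 1 := by nlinarith
    have h2 := mul_le_mul_of_nonneg_left hδδ (Real.exp_pos (-((N:ℝ)*β))).le
    rw [mul_one] at h2
    calc Real.exp (-((N:ℝ)*β)) * δ * δ
        = Real.exp (-((N:ℝ)*β)) * (δ * δ) := by ring
      _ ≤ Real.exp (-((N:ℝ)*β)) := h2
      _ ≤ Real.exp ((N:ℝ)*β) := h1
  · intro θ x
    obtain ⟨hv, hvpos, heig0⟩ := hΛ θ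
    -- normalized eigen-equation
    have heig : (Matrix.of fun a b => Real.exp ((fun z => α * C θ z - Λ θ) a) * P θ a b) *ᵥ hv
        = hv := by
      have hmat : (Matrix.of fun a b => Real.exp (α * C θ a - Λ θ) * P θ a b)
          = Real.exp (-Λ θ) • (Matrix.of fun a b => Real.exp (α * C θ a) * P θ a b) := by
        ext a b
        simp only [Matrix.of_apply, Matrix.smul_apply, smul_eq_mul]
        rw [show α * C θ a - Λ θ = -Λ θ + α * C θ a from by ring, Real.exp_add]
        ring
      show (Matrix.of fun a b => Real.exp (α * C θ a - Λ θ) * P θ a b) *ᵥ hv = hv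
      rw [hmat, Matrix.smul_mulVec, heig0, smul_smul, ← Real.exp_add]
      simp
    -- Λ θ ≤ α * Chi
    have hΛle : Λ θ ≤ α * Chi := by
      obtain ⟨x1, -, hx1⟩ := Finset.exists_max_image Finset.univ hv
        ⟨z0, Finset.mem_univ _⟩
      have h1 := congrFun heig0 x1
      simp only [Pi.smul_apply, smul_eq_mul] at h1
      have h2 : ((Matrix.of fun a b => Real.exp (α * C θ a) * P θ a b) *ᵥ hv) x1
          = ∑ b, Real.exp (α * C θ x1) * P θ x1 b * hv b := by
        simp [Matrix.mulVec, dotProduct, mul_assoc]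
      have h3 : ∑ b, Real.exp (α * C θ x1) * P θ x1 b * hv b
          ≤ ∑ b, Real.exp (α * Chi) * P θ x1 b * hv x1 := by
        refine Finset.sum_le_sum fun b _ => ?_
        have e1 : Real.exp (α * C θ x1) ≤ Real.exp (α * Chi) :=
          Real.exp_le_exp.mpr (mul_le_mul_of_nonneg_left (hC θ x1).2 hα.le)
        have e2 : hv b ≤ hv x1 := hx1 b (Finset.mem_univ b)
        have e3 := (hstoch θ).1 x1 b
        exact mul_le_mul (mul_le_mul_of_nonneg_right e1 e3) e2 (hvpos b).le
          (mul_nonneg (Real.exp_nonneg _) e3)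
      have h4 : ∑ b, Real.exp (α * Chi) * P θ x1 b * hv x1
          = Real.exp (α * Chi) * hv x1 := by
        rw [← Finset.sum_mul, ← Finset.mul_sum, (hstoch θ).2 x1]
        ring
      have h5 : Real.exp (Λ θ) * hv x1 ≤ Real.exp (α * Chi) * hv x1 := by
        rw [← h1, h2]
        rw [h4] at h3
        exact h3
      have h6 : Real.exp (Λ θ) ≤ Real.exp (α * Chi) :=
        le_of_mul_le_mul_right (by simpa [mul_comm] using h5) (hvpos x1)
      exact Real.exp_le_exp.mp h6
    have hg : ∀ z, -β ≤ (fun z => α * C θ z - Λ θ) z := by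
      intro z
      have := mul_le_mul_of_nonneg_left (hC θ z).1 hα.le
      simp only [hβdef]
      nlinarith
    have hposN : ∀ a b, δ ≤ (P θ ^ N) a b :=
      hpos (P θ) (subset_closure (Set.mem_range_self θ))
    exact Statement14Aux.per_matrix (P θ) (hstoch θ) (fun z => α * C θ z - Λ θ) xs hv hvpos
      heig β hβ0 hg N hN1 δ hδ hposN x
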